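/- For every z ∈ 𝔻, the coherent state wave function is normalized: ∫₀^∞ |Ψ_{ν,m;z}(ξ)|² dξ/ξ = 1, where Ψ_{ν,m;z}(ξ) = (−1)^m (m!/Γ(2ν−m))^{1/2} |1−z|^{2m} (1−z)^{−2ν} (1−|z|²)^{ν−m} ξ^{ν−m} exp(−(ξ/2)(1+z)/(1−z)) L_m^{(α)}(ξ(1−|z|²)/|1−z|²). -/

import Mathlib

open MeasureTheory Complex Real Set

noncomputable section

/-- The measure `dξ/ξ` on `(0,∞)`. -/
def mIoi : Measure ℝ :=
  (volume.restrict (Set.Ioi (0:ℝ))).withDensity (fun ξ => ENNReal.ofReal ξ⁻¹)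

/-- The weighted measure `(1-|z|²)^{2ν-2} dμ(z)` on the unit disk. -/
def mD (ν : ℝ) : Measure ℂ :=
  (volume.restrict {z : ℂ | ‖z‖ < 1}).withDensity
    (fun z => ENNReal.ofReal ((1 - ‖z‖ ^ 2) ^ (2*ν - 2)))

/-- Generalized Laguerre polynomial `L_n^{(α)}(x)`. -/
def lag (α : ℝ) (n : ℕ) (x : ℝ) : ℝ :=
  ∑ j ∈ Finset.range (n+1),
    (-1)^j * (Real.Gamma (n + α + 1) /
      (Real.Gamma (j + α + 1) * (Nat.factorial (n - j)) * (Nat.factorial j))) * x ^ j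

/-- Jacobi polynomial `P_n^{(a,b)}(x)`. -/
def jac (a b : ℝ) (n : ℕ) (x : ℝ) : ℝ :=
  ∑ s ∈ Finset.range (n+1),
    (Real.Gamma (n + a + 1) / (Real.Gamma (a + s + 1) * (Nat.factorial (n - s)))) *
    (Real.Gamma (n + b + 1) / (Real.Gamma (n + b - s + 1) * (Nat.factorial s))) *
    ((x - 1)/2)^s * ((x + 1)/2)^(n - s)

/-- The eigenfunctions `φ_k^{ν,m}`. -/
def phiE (ν : ℝ) (m k : ℕ) (z : ℂ) : ℂ :=
  (-1)^(min m k) * ((((1 - ‖z‖ ^ 2) ^ m)⁻¹ : ℝ) : ℂ) *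
    (if k ≤ m then (starRingEnd ℂ z)^(m - k) else z^(k - m)) *
    ((jac ((max m k - min m k : ℕ) : ℝ) (2*(ν - m) - 1) (min m k)
        (1 - 2 * ‖z‖ ^ 2) : ℝ) : ℂ)

/-- The square norms `ρ_k^{ν,m}`. -/
def rhoN (ν : ℝ) (m k : ℕ) : ℝ :=
  (π / (2*(ν - m) - 1)) *
    ((Nat.factorial (max m k)) * Real.Gamma (2*(ν - m) + min m k)) /
    ((Nat.factorial (min m k)) * Real.Gamma (2*(ν - m) + max m k))

/-- The Laguerre basis functions `ψ_{ν,m;k}` of `L²((0,∞), dξ/ξ)`. -/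
def psiF (ν : ℝ) (m k : ℕ) (ξ : ℝ) : ℝ :=
  Real.sqrt (Nat.factorial k / Real.Gamma (2*(ν - m) + k)) * ξ ^ (ν - (m:ℝ)) *
    Real.exp (-ξ/2) * lag (2*(ν - m) - 1) k ξ

/-- The kernel of the integral defining the generalized second Bargmann transform. -/
def WKer (ν : ℝ) (m : ℕ) (z : ℂ) (ξ : ℝ) : ℂ :=
  ((ξ ^ (ν - (m:ℝ)) : ℝ) : ℂ) *
    Complex.exp (-(ξ:ℂ)/2 * ((1 + z)/(1 - z))) *
    ((lag (2*(ν - m) - 1) m (ξ * (1 - ‖z‖ ^ 2) / ‖1 - z‖ ^ 2) : ℝ) : ℂ)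

/-- The generalized second Bargmann transform `W_{ν,m}`. -/
def W (ν : ℝ) (m : ℕ) (φ : ℝ → ℂ) (z : ℂ) : ℂ :=
  (Real.sqrt ((2*(ν - m) - 1) * Nat.factorial m / (π * Real.Gamma (2*ν - m))) : ℂ) *
  (((‖1 - z‖ / (1 - ‖z‖ ^ 2)) ^ (2*m) : ℝ) : ℂ) *
  (1 - z) ^ ((-(2*ν) : ℝ) : ℂ) *
  ∫ ξ, WKer ν m z ξ * φ ξ ∂mIoi

/-- The coherent state wave functions `Ψ_{ν,m;z}`. -/
def PsiCS (ν : ℝ) (m : ℕ) (z : ℂ) (ξ : ℝ) : ℂ :=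
  (-1)^m * (Real.sqrt (Nat.factorial m / Real.Gamma (2*ν - m)) : ℂ) *
  ((‖1 - z‖ ^ (2*m) : ℝ) : ℂ) * (1 - z) ^ ((-(2*ν) : ℝ) : ℂ) *
  (((1 - ‖z‖ ^ 2) ^ (ν - (m:ℝ)) : ℝ) : ℂ) * ((ξ ^ (ν - (m:ℝ)) : ℝ) : ℂ) *
  Complex.exp (-(ξ:ℂ)/2 * ((1 + z)/(1 - z))) *
  ((lag (2*(ν - m) - 1) m (ξ * (1 - ‖z‖ ^ 2) / ‖1 - z‖ ^ 2) : ℝ) : ℂ)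

/-- The reproducing kernel `K_m^ν(z,w)`. -/
def KK (ν : ℝ) (m : ℕ) (z w : ℂ) : ℂ :=
  (((2*(ν - m) - 1) / π : ℝ) : ℂ) *
  (1 - z * (starRingEnd ℂ w)) ^ ((-(2*ν) : ℝ) : ℂ) *
  (((‖1 - z * (starRingEnd ℂ w)‖ ^ 2 /
      ((1 - ‖z‖ ^ 2) * (1 - ‖w‖ ^ 2))) ^ m : ℝ) : ℂ) *
  ((jac 0 (2*(ν - m) - 1) m
      (2 * (1 - ‖z‖ ^ 2) * (1 - ‖w‖ ^ 2) /
        ‖1 - z * (starRingEnd ℂ w)‖ ^ 2 - 1) : ℝ) : ℂ)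

/-- Wirtinger derivative `∂/∂z`. -/
def wirtZ (f : ℂ → ℂ) (z : ℂ) : ℂ :=
  (fderiv ℝ f z 1 - Complex.I * fderiv ℝ f z Complex.I) / 2

/-- Wirtinger derivative `∂/∂z̄`. -/
def wirtZbar (f : ℂ → ℂ) (z : ℂ) : ℂ :=
  (fderiv ℝ f z 1 + Complex.I * fderiv ℝ f z Complex.I) / 2

/-- The magnetic Schrödinger-type operator `H_ν`. -/
def Hop (ν : ℝ) (f : ℂ → ℂ) (z : ℂ) : ℂ :=
  -4 * (((1 - ‖z‖ ^ 2 : ℝ)) : ℂ) *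
    ((((1 - ‖z‖ ^ 2 : ℝ)) : ℂ) * wirtZ (wirtZbar f) z
      - 2*(ν:ℂ) * (starRingEnd ℂ z) * wirtZbar f z)

end


section Aux

lemma altPascal (m : ℕ) (f : ℕ → ℝ) :
    ∑ j ∈ Finset.range (m+2), (-1:ℝ)^j * ((m+1).choose j) * f j
    = ∑ j ∈ Finset.range (m+1), (-1:ℝ)^j * (m.choose j) * (f j - f (j+1)) := by
  rw [Finset.sum_range_succ' _ (m+1)]
  have h1 : ∀ j ∈ Finset.range (m+1),
      (-1:ℝ)^(j+1) * (((m+1).choose (j+1) : ℕ) : ℝ) * f (j+1)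
      = -((-1:ℝ)^j * (m.choose j) * f (j+1)) + (-1:ℝ)^(j+1) * (m.choose (j+1)) * f (j+1) := by
    intro j _
    rw [Nat.choose_succ_succ]
    push_cast; ring
  rw [Finset.sum_congr rfl h1, Finset.sum_add_distrib]
  have h2 : ∑ j ∈ Finset.range (m+1), (-1:ℝ)^(j+1) * (m.choose (j+1)) * f (j+1)
      + (-1:ℝ)^0 * (((m+1).choose 0 : ℕ) : ℝ) * f 0
      = ∑ j ∈ Finset.range (m+1), (-1:ℝ)^j * (m.choose j) * f j := by
    rw [Finset.sum_range_succ' (fun j => (-1:ℝ)^j * (m.choose j) * f j) m,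
      Finset.sum_range_succ]
    simp [Nat.choose_succ_self]
  have h3 : ∑ j ∈ Finset.range (m+1), (-1:ℝ)^j * (m.choose j) * (f j - f (j+1))
      = ∑ j ∈ Finset.range (m+1), (-1:ℝ)^j * (m.choose j) * f j
        - ∑ j ∈ Finset.range (m+1), (-1:ℝ)^j * (m.choose j) * f (j+1) := by
    rw [← Finset.sum_sub_distrib]; congr 1; ext j; ring
  rw [h3, ← h2]
  push_cast
  rw [Finset.sum_neg_distrib]
  ring

lemma keyFD : ∀ (m i : ℕ), i ≤ m → ∀ y : ℝ,
    ∑ j ∈ Finset.range (m+1), (-1:ℝ)^j * (m.choose j) * ∏ k ∈ Finset.range i, (y + j + k)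
    = if i = m then (-1:ℝ)^m * m.factorial else 0 := by
  intro m
  induction m with
  | zero =>
    intro i hi y
    interval_cases i
    simp
  | succ m ih =>
    intro i hi y
    rw [show m+1+1 = m+2 from rfl, altPascal]
    cases i with
    | zero =>
      simp
    | succ i =>
      have hi' : i ≤ m := Nat.succ_le_succ_iff.mp hi
      have hdiff : ∀ j ∈ Finset.range (m+1),
          (-1:ℝ)^j * (m.choose j) *
            ((∏ k ∈ Finset.range (i+1), (y + (j:ℝ) + k)) - ∏ k ∈ Finset.range (i+1), (y + ((j+1:ℕ):ℝ) + k))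
          = (-((i:ℝ)+1)) * ((-1:ℝ)^j * (m.choose j) * ∏ k ∈ Finset.range i, ((y+1) + j + k)) := by
        intro j _
        have e1 : (∏ k ∈ Finset.range (i+1), (y + (j:ℝ) + k))
            = (∏ k ∈ Finset.range i, ((y+1) + j + k)) * (y + j) := by
          rw [Finset.prod_range_succ']
          congr 1
          · exact Finset.prod_congr rfl (fun k _ => by push_cast; ring)
          · push_cast; ring
        have e2 : (∏ k ∈ Finset.range (i+1), (y + ((j+1:ℕ):ℝ) + k))
            = (∏ k ∈ Finset.range i, ((y+1) + j + k)) * (y + j + 1 + i) := by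
          rw [Finset.prod_range_succ]
          congr 1
          · exact Finset.prod_congr rfl (fun k _ => by push_cast; ring)
          · push_cast; ring
        rw [e1, e2]; ring
      rw [Finset.sum_congr rfl hdiff, ← Finset.mul_sum, ih i hi' (y+1)]
      by_cases h : i = m
      · subst h
        simp only [if_pos rfl, Nat.factorial_succ]
        push_cast; ring
      · have h2 : ¬ (i + 1 = m + 1) := fun hh => h (Nat.succ_injective hh)
        rw [if_neg h, if_neg h2, mul_zero]

lemma Gamma_add_nat (x : ℝ) (hx : 0 < x) (i : ℕ) :
    Real.Gamma (x + i) = (∏ k ∈ Finset.range i, (x + k)) * Real.Gamma x := by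
  induction i with
  | zero => simp
  | succ i ih =>
    have h : x + ((i:ℝ)+1) = (x + i) + 1 := by ring
    push_cast
    rw [h, Real.Gamma_add_one (by positivity), ih, Finset.prod_range_succ]
    ring


lemma rpow_alg (w s ξ ν : ℝ) (m : ℕ) (hw : 0 < w) (hs : 0 < s) (hξ : 0 < ξ) :
    ξ⁻¹ * ((w^(2*m))^2 * (w ^ (-(2*ν)))^2 * (s ^ (ν - (m:ℝ)))^2 * (ξ ^ (ν - (m:ℝ)))^2)
    = (s/w^2) * ((s/w^2) * ξ) ^ (2*(ν-(m:ℝ))-1) := by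
  have e1 : ((w^(2*m))^2 : ℝ) = w ^ (((2*m:ℕ):ℝ)*2) := by
    rw [Real.rpow_mul hw.le, Real.rpow_natCast, Real.rpow_two]
  have e2 : (w ^ (-(2*ν)))^2 = w ^ (-(2*ν)*2) := by
    rw [Real.rpow_mul hw.le, Real.rpow_two]
  have e3 : (s ^ (ν - (m:ℝ)))^2 = s ^ ((ν - (m:ℝ))*2) := by
    rw [Real.rpow_mul hs.le, Real.rpow_two]
  have e4 : (ξ ^ (ν - (m:ℝ)))^2 = ξ ^ ((ν - (m:ℝ))*2) := by
    rw [Real.rpow_mul hξ.le, Real.rpow_two]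
  have e5 : ξ⁻¹ = ξ ^ (-1:ℝ) := (Real.rpow_neg_one ξ).symm
  have hw2 : (0:ℝ) < w^2 := by positivity
  have e6 : ((s/w^2) * ξ) ^ (2*(ν-(m:ℝ))-1)
      = s ^ (2*(ν-(m:ℝ))-1) * (w^2) ^ (-(2*(ν-(m:ℝ))-1)) * ξ ^ (2*(ν-(m:ℝ))-1) := by
    rw [Real.mul_rpow (by positivity) hξ.le, Real.div_rpow hs.le hw2.le,
      Real.rpow_neg hw2.le, div_eq_mul_inv]
  have e7 : ((w^2:ℝ)) ^ (-(2*(ν-(m:ℝ))-1)) = w ^ ((2:ℝ) * (-(2*(ν-(m:ℝ))-1))) := by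
    rw [Real.rpow_mul hw.le, Real.rpow_two]
  have e8 : (s/w^2) = s ^ (1:ℝ) * w ^ (-2:ℝ) := by
    rw [Real.rpow_one, Real.rpow_neg hw.le, div_eq_mul_inv, Real.rpow_two]
  rw [e1, e2, e3, e4, e5, e6, e7, e8]
  have m1 : s ^ (1:ℝ) * w ^ (-2:ℝ) * (s ^ (2*(ν-(m:ℝ))-1) * w ^ (2 * -(2*(ν-(m:ℝ))-1)) * ξ ^ (2*(ν-(m:ℝ))-1))
      = w ^ (-2 + 2 * -(2*(ν-(m:ℝ))-1)) * s ^ (1 + (2*(ν-(m:ℝ))-1)) * ξ ^ (2*(ν-(m:ℝ))-1) := by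
    rw [Real.rpow_add hw, Real.rpow_add hs]; ring
  rw [m1,
    show (-2:ℝ) + 2 * -(2*(ν-(m:ℝ))-1) = ((2*m:ℕ):ℝ)*2 + -(2*ν)*2 by push_cast; ring,
    show (1:ℝ) + (2*(ν-(m:ℝ))-1) = (ν-(m:ℝ))*2 by ring,
    show 2*(ν-(m:ℝ))-1 = -1 + (ν-(m:ℝ))*2 by ring,
    Real.rpow_add hξ]
  ring_nf
  rw [mul_assoc (ξ ^ (-1:ℝ)), ← Real.rpow_add hw,
    show ((m*2:ℕ):ℝ)*2 + -(ν*4) = ((m*2:ℕ):ℝ)*2 - ν*4 by ring]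
  ring

lemma lagNorm (α : ℝ) (hα : 0 < α) (m : ℕ) :
    ∫ u in Set.Ioi (0:ℝ), Real.exp (-u) * u ^ α * (lag α m u)^2
      = Real.Gamma (α + m + 1) / m.factorial := by
  set c : ℕ → ℝ := fun i => (-1:ℝ)^i * (Real.Gamma (m + α + 1) /
      (Real.Gamma (i + α + 1) * (Nat.factorial (m - i)) * (Nat.factorial i))) with hc
  -- Step A: pointwise expansion
  have hpt : ∀ u ∈ Set.Ioi (0:ℝ),
      Real.exp (-u) * u ^ α * (lag α m u)^2
      = ∑ p ∈ Finset.range (m+1) ×ˢ Finset.range (m+1),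
          (c p.1 * c p.2) * (Real.exp (-u) * u ^ (α + 1 + p.1 + p.2 - 1)) := by
    intro u hu
    have hu0 : 0 < u := hu
    rw [lag, sq, Finset.sum_mul_sum, ← Finset.sum_product']
    rw [Finset.mul_sum]
    refine Finset.sum_congr rfl (fun p _ => ?_)
    have : u ^ α * (u ^ p.1 * u ^ p.2) = u ^ (α + 1 + (p.1:ℝ) + p.2 - 1) := by
      rw [← Real.rpow_natCast u p.1, ← Real.rpow_natCast u p.2,
        ← Real.rpow_add hu0, ← Real.rpow_add hu0]
      ring_nf
    rw [hc, ← this]; push_cast; ring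
  -- Step B: integrability and swap
  have hint : ∀ p : ℕ × ℕ, IntegrableOn
      (fun u => (c p.1 * c p.2) * (Real.exp (-u) * u ^ (α + 1 + (p.1:ℝ) + p.2 - 1)))
      (Set.Ioi (0:ℝ)) := by
    intro p
    exact (Real.GammaIntegral_convergent (by positivity)).const_mul _
  rw [setIntegral_congr_fun (by measurability) hpt,
    integral_finset_sum _ (fun p _ => hint p)]
  -- Step C: each integral is a Gamma value
  have hC : ∀ p : ℕ × ℕ,
      ∫ u in Set.Ioi (0:ℝ), (c p.1 * c p.2) * (Real.exp (-u) * u ^ (α + 1 + (p.1:ℝ) + p.2 - 1))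
      = (c p.1 * c p.2) * Real.Gamma (α + 1 + p.1 + p.2) := by
    intro p
    rw [MeasureTheory.integral_const_mul, ← Real.Gamma_eq_integral (by positivity)]
  rw [Finset.sum_congr rfl (fun p _ => hC p), Finset.sum_product]
  -- Step D: algebra
  have hGpos : ∀ x : ℝ, 0 < x → 0 < Real.Gamma x := fun x hx => Real.Gamma_pos_of_pos hx
  have hinner : ∀ i ∈ Finset.range (m+1),
      ∑ j ∈ Finset.range (m+1), c i * c j * Real.Gamma (α + 1 + (i:ℝ) + j)
      = c i * (Real.Gamma (m + α + 1) / m.factorial) *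
          (if i = m then (-1:ℝ)^m * m.factorial else 0) := by
    intro i hi
    have step : ∀ j ∈ Finset.range (m+1),
        c i * c j * Real.Gamma (α + 1 + (i:ℝ) + j)
        = c i * (Real.Gamma (m + α + 1) / m.factorial) *
            ((-1:ℝ)^j * (m.choose j) * ∏ k ∈ Finset.range i, ((α + 1) + j + k)) := by
      intro j hj
      have hjm : j ≤ m := Nat.lt_succ_iff.mp (Finset.mem_range.mp hj)
      have hG1 : Real.Gamma (α + 1 + (i:ℝ) + j)
          = (∏ k ∈ Finset.range i, ((α + 1 + (j:ℝ)) + k)) * Real.Gamma (α + 1 + j) := by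
        rw [show α + 1 + (i:ℝ) + j = (α + 1 + (j:ℝ)) + (i:ℕ) by push_cast; ring]
        exact Gamma_add_nat _ (by positivity) i
      have hG2 : Real.Gamma ((j:ℝ) + α + 1) = Real.Gamma (α + 1 + j) := by ring_nf
      have hGne : Real.Gamma (α + 1 + (j:ℝ)) ≠ 0 := (hGpos _ (by positivity)).ne'
      have hfac : (m.choose j : ℝ) * ((m - j).factorial) * (j.factorial) = m.factorial := by
        have := Nat.choose_mul_factorial_mul_factorial hjm
        push_cast [← this]
        ring
      have hfacne : ((m - j).factorial : ℝ) ≠ 0 := Nat.cast_ne_zero.mpr (Nat.factorial_ne_zero _)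
      have hfacne2 : ((j).factorial : ℝ) ≠ 0 := Nat.cast_ne_zero.mpr (Nat.factorial_ne_zero _)
      have hfacne3 : ((m).factorial : ℝ) ≠ 0 := Nat.cast_ne_zero.mpr (Nat.factorial_ne_zero _)
      rw [hG1, hc]
      simp only [hG2]
      field_simp
      linear_combination (-1:ℝ) * hfac
    rw [Finset.sum_congr rfl step, ← Finset.mul_sum, keyFD m i (Nat.lt_succ_iff.mp (Finset.mem_range.mp hi)) (α+1)]
  rw [Finset.sum_congr rfl hinner]
  have hfin : ∀ i ∈ Finset.range (m+1),
      c i * (Real.Gamma (m + α + 1) / m.factorial) * (if i = m then (-1:ℝ)^m * m.factorial else 0)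
      = if i = m then Real.Gamma (α + m + 1) / m.factorial else 0 := by
    intro i hi
    by_cases h : i = m
    · subst h
      rw [if_pos rfl, if_pos rfl, hc]
      have hGne : Real.Gamma ((i:ℝ) + α + 1) ≠ 0 := (hGpos _ (by positivity)).ne'
      have hfacne : ((i).factorial : ℝ) ≠ 0 := Nat.cast_ne_zero.mpr (Nat.factorial_ne_zero _)
      simp only [Nat.sub_self, Nat.factorial_zero, Nat.cast_one, mul_one]
      rw [show α + (i:ℝ) + 1 = (i:ℝ) + α + 1 by ring]
      field_simp
      ring_nf
      rw [mul_comm i 2, pow_mul]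
      norm_num
    · rw [if_neg h, if_neg h, mul_zero]
  rw [Finset.sum_congr rfl hfin, Finset.sum_ite_eq' (Finset.range (m+1)) m]
  rw [if_pos (Finset.self_mem_range_succ m)]

end Aux

/-- the coherent state wave functions are normalized:
`∫₀^∞ |Ψ_{ν,m;z}(ξ)|² dξ/ξ = 1` for every `z ∈ 𝔻`. -/
theorem stmt11 (ν : ℝ) (hν : 1 < 2*ν) (m : ℕ) (hm : (m:ℝ) < ν - 1/2)
    (z : ℂ) (hz : ‖z‖ < 1) :
    ∫ ξ, ‖PsiCS ν m z ξ‖ ^ 2 ∂mIoi = 1 := by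
  have hα : 0 < 2*(ν - (m:ℝ)) - 1 := by linarith
  have hz1 : (1:ℂ) - z ≠ 0 := by
    intro h
    have hz2 : z = 1 := by linear_combination -h
    rw [hz2] at hz; simp at hz
  set α : ℝ := 2*(ν - (m:ℝ)) - 1 with hαdef
  have hw0 : 0 < ‖1 - z‖ := norm_pos_iff.mpr hz1
  set w : ℝ := ‖1 - z‖ with hwdef
  have hs0 : 0 < 1 - ‖z‖ ^ 2 := by nlinarith [norm_nonneg z]
  set s : ℝ := 1 - ‖z‖ ^ 2 with hsdef
  set t : ℝ := s / w^2 with htdef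
  have ht0 : 0 < t := by positivity
  have hG : 0 < Real.Gamma (2*ν - m) := Real.Gamma_pos_of_pos (by linarith)
  have hfac0 : (0:ℝ) < m.factorial := by positivity
  -- real part of the exponent
  have hre : ((1 + z)/(1 - z)).re = t := by
    rw [Complex.div_re]
    have h1 : Complex.normSq (1 - z) = w^2 := by rw [← Complex.sq_norm]
    have h2 : ‖z‖ ^ 2 = z.re^2 + z.im^2 := by
      rw [Complex.sq_norm, Complex.normSq_apply]; ring
    rw [h1, htdef, hsdef, h2]
    simp [Complex.add_re, Complex.add_im, Complex.sub_re, Complex.sub_im]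
    ring
  -- pointwise formula
  have key : ∀ ξ ∈ Set.Ioi (0:ℝ),
      ξ⁻¹ * ‖PsiCS ν m z ξ‖ ^ 2
      = ((m.factorial:ℝ)/Real.Gamma (2*ν - m)) * t *
          (Real.exp (-(t*ξ)) * (t*ξ) ^ α * (lag α m (t*ξ))^2) := by
    intro ξ hξ
    have hξ0 : (0:ℝ) < ξ := hξ
    have harg : ξ * (1 - ‖z‖ ^ 2) / ‖1 - z‖ ^ 2 = t * ξ := by
      rw [← hsdef, ← hwdef, htdef]; field_simp
    have hexp : ‖Complex.exp (-(ξ:ℂ)/2 * ((1 + z)/(1 - z)))‖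
        = Real.exp (-(ξ/2) * t) := by
      rw [Complex.norm_exp]
      congr 1
      rw [show -(ξ:ℂ)/2 = ((-(ξ/2) : ℝ):ℂ) by push_cast; ring, Complex.re_ofReal_mul, hre]
    have hcpow : ‖(1 - z) ^ ((-(2*ν) : ℝ) : ℂ)‖ = w ^ (-(2*ν)) := by
      rw [Complex.norm_cpow_of_ne_zero hz1]
      simp [hwdef]
    have habs : ‖PsiCS ν m z ξ‖
        = Real.sqrt ((m.factorial:ℝ) / Real.Gamma (2*ν - m)) *
          (w^(2*m) * w ^ (-(2*ν)) * s ^ (ν - (m:ℝ)) * ξ ^ (ν - (m:ℝ)) *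
            Real.exp (-(ξ/2) * t) * |lag α m (t*ξ)|) := by
      rw [PsiCS, harg]
      rw [norm_mul, norm_mul, norm_mul, norm_mul, norm_mul, norm_mul, norm_mul, hexp, hcpow]
      rw [norm_pow]
      simp only [norm_neg, norm_one, one_pow, Complex.norm_real, Real.norm_eq_abs]
      rw [_root_.abs_of_nonneg (Real.sqrt_nonneg _), _root_.abs_of_nonneg (by positivity : (0:ℝ) ≤ w^(2*m)),
        _root_.abs_of_nonneg (Real.rpow_nonneg hs0.le _), _root_.abs_of_nonneg (Real.rpow_nonneg hξ0.le _)]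
      ring
    rw [habs]
    rw [mul_pow, Real.sq_sqrt (by positivity)]
    rw [mul_pow, mul_pow, mul_pow, mul_pow, mul_pow, _root_.sq_abs]
    have hexp2 : Real.exp (-(ξ/2)*t)^2 = Real.exp (-(t*ξ)) := by
      rw [sq, ← Real.exp_add]; ring_nf
    rw [hexp2]
    have halg := rpow_alg w s ξ ν m hw0 hs0 hξ0
    rw [← htdef, ← hαdef] at halg
    linear_combination ((m.factorial:ℝ)/Real.Gamma (2*ν - m) * Real.exp (-(t*ξ)) *
      (lag α m (t*ξ))^2) * halg
  -- convert the measure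
  have hμ : mIoi = (volume.restrict (Set.Ioi (0:ℝ))).withDensity
      (fun ξ => ((Real.toNNReal ξ⁻¹ : NNReal) : ENNReal)) := rfl
  have hmeas : Measurable (fun ξ : ℝ => Real.toNNReal ξ⁻¹) := measurable_inv.real_toNNReal
  rw [hμ, integral_withDensity_eq_integral_smul hmeas]
  have hcong : ∀ ξ ∈ Set.Ioi (0:ℝ),
      (Real.toNNReal ξ⁻¹ : NNReal) • (‖PsiCS ν m z ξ‖ ^ 2)
      = (fun u => ((m.factorial:ℝ)/Real.Gamma (2*ν - m)) * t *
          (Real.exp (-u) * u ^ α * (lag α m u)^2)) (t * ξ) := by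
    intro ξ hξ
    have hξ0 : (0:ℝ) < ξ := hξ
    rw [NNReal.smul_def, Real.coe_toNNReal _ (inv_nonneg.mpr hξ0.le)]
    simpa using key ξ hξ
  rw [MeasureTheory.setIntegral_congr_fun measurableSet_Ioi hcong]
  rw [MeasureTheory.integral_comp_mul_left_Ioi (fun u => ((m.factorial:ℝ)/Real.Gamma (2*ν - (m:ℝ))) * t *
      (Real.exp (-u) * u ^ α * (lag α m u)^2)) 0 ht0, mul_zero]
  simp only [MeasureTheory.integral_const_mul, smul_eq_mul]
  rw [lagNorm α hα m]
  rw [show α + (m:ℝ) + 1 = 2*ν - m by rw [hαdef]; ring]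
  field_simp
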